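/- Let (X_i, Y_i), i=1,...,n, be i.i.d. pairs of random elements of L^2[0,1] with E‖X_1‖^2 < ∞ and E‖Y_1‖^2 < ∞. Define the empirical Wasserstein covariance Ĉ_n = n^{-1} Σ_i ⟨X_i - X̄, Y_i - Ȳ⟩, where ⟨·,·⟩ is the L^2[0,1] inner product and X̄, Ȳ are the sample means. Then Ĉ_n converges almost surely to C = E[⟨X_1 - E X_1, Y_1 - E Y_1⟩]. -/

import Mathlib

open MeasureTheory Filter

set_option maxHeartbeats 1000000
set_option synthInstance.maxHeartbeats 1000000

/-- The Hilbert space L²[0,1]. -/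
noncomputable abbrev L2unit : Type :=
  MeasureTheory.Lp ℝ 2 ((volume : Measure ℝ).restrict (Set.Icc (0 : ℝ) 1))

private instance fact_two_ne_top' : Fact ((2 : ENNReal) ≠ ⊤) := ⟨by norm_num⟩

/-- Strong consistency of the empirical Wasserstein covariance: for i.i.d. pairs
`(Xᵢ, Yᵢ)` of Bochner square-integrable random elements of `L²[0,1]`, the empirical
covariance `Ĉₙ = n⁻¹ Σᵢ ⟨Xᵢ - X̄, Yᵢ - Ȳ⟩` converges almost surely to
`C = E⟨X₁ - E X₁, Y₁ - E Y₁⟩`. -/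
theorem empirical_wasserstein_covariance_consistent
    [MeasurableSpace L2unit] [BorelSpace L2unit]
    {Ω : Type*} [MeasurableSpace Ω] (μ : Measure Ω) [IsProbabilityMeasure μ]
    (Z : ℕ → Ω → L2unit × L2unit)
    (hmeas : ∀ i, Measurable (Z i))
    (hindep : ProbabilityTheory.iIndepFun Z μ)
    (hident : ∀ i, ProbabilityTheory.IdentDistrib (Z i) (Z 0) μ μ)
    (hX2 : Integrable (fun ω => ‖(Z 0 ω).1‖ ^ 2) μ)
    (hY2 : Integrable (fun ω => ‖(Z 0 ω).2‖ ^ 2) μ) :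
    ∀ᵐ ω ∂μ, Tendsto
      (fun n : ℕ =>
        (n : ℝ)⁻¹ * ∑ i ∈ Finset.range n,
          (inner ℝ ((Z i ω).1 - (n : ℝ)⁻¹ • ∑ j ∈ Finset.range n, (Z j ω).1)
                 ((Z i ω).2 - (n : ℝ)⁻¹ • ∑ j ∈ Finset.range n, (Z j ω).2) : ℝ))
      atTop
      (nhds (∫ ω', (inner ℝ ((Z 0 ω').1 - ∫ ω'', (Z 0 ω'').1 ∂μ)
                          ((Z 0 ω').2 - ∫ ω'', (Z 0 ω'').2 ∂μ) : ℝ) ∂μ)) := by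
  have hsc : SecondCountableTopology L2unit := inferInstance
  set X : ℕ → Ω → L2unit := fun i ω => (Z i ω).1 with hXdef
  set Y : ℕ → Ω → L2unit := fun i ω => (Z i ω).2 with hYdef
  have hXm : ∀ i, Measurable (X i) := fun i => measurable_fst.comp (hmeas i)
  have hYm : ∀ i, Measurable (Y i) := fun i => measurable_snd.comp (hmeas i)
  -- integrability of X 0, Y 0
  have hint : ∀ (f : ℕ → Ω → L2unit), (∀ i, Measurable (f i)) →
      Integrable (fun ω => ‖f 0 ω‖ ^ 2) μ → Integrable (f 0) μ := by
    intro f hm h2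
    refine Integrable.mono' (h2.add (integrable_const 1)) (hm 0).aestronglyMeasurable
      (ae_of_all _ fun ω => ?_)
    simp only [norm_norm, Pi.add_apply]
    nlinarith [sq_nonneg (‖f 0 ω‖ - 1), norm_nonneg (f 0 ω)]
  have hX1 : Integrable (X 0) μ := hint X hXm hX2
  have hY1 : Integrable (Y 0) μ := hint Y hYm hY2
  -- the inner-product process
  set W : ℕ → Ω → ℝ := fun i ω => (inner ℝ (X i ω) (Y i ω) : ℝ) with hWdef
  have hinner_meas : Measurable (fun p : L2unit × L2unit => (inner ℝ p.1 p.2 : ℝ)) :=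
    continuous_inner.measurable
  have hWm : ∀ i, Measurable (W i) := fun i => hinner_meas.comp (hmeas i)
  have hW1 : Integrable (W 0) μ := by
    refine Integrable.mono' (hX2.add hY2) (hWm 0).aestronglyMeasurable
      (ae_of_all _ fun ω => ?_)
    have h := abs_real_inner_le_norm (X 0 ω) (Y 0 ω)
    simp only [Real.norm_eq_abs, Pi.add_apply]
    nlinarith [sq_nonneg (‖X 0 ω‖ - ‖Y 0 ω‖), norm_nonneg (X 0 ω), norm_nonneg (Y 0 ω)]
  -- i.i.d. of components
  have hXind : Pairwise (Function.onFun (ProbabilityTheory.IndepFun · · μ) X) := fun i j hij =>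
    (hindep.indepFun hij).comp measurable_fst measurable_fst
  have hYind : Pairwise (Function.onFun (ProbabilityTheory.IndepFun · · μ) Y) := fun i j hij =>
    (hindep.indepFun hij).comp measurable_snd measurable_snd
  have hWind : Pairwise (Function.onFun (ProbabilityTheory.IndepFun · · μ) W) := fun i j hij =>
    (hindep.indepFun hij).comp hinner_meas hinner_meas
  have hXid : ∀ i, ProbabilityTheory.IdentDistrib (X i) (X 0) μ μ := fun i =>
    (hident i).comp measurable_fst
  have hYid : ∀ i, ProbabilityTheory.IdentDistrib (Y i) (Y 0) μ μ := fun i =>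
    (hident i).comp measurable_snd
  have hWid : ∀ i, ProbabilityTheory.IdentDistrib (W i) (W 0) μ μ := fun i =>
    (hident i).comp hinner_meas
  -- strong laws
  have hXslln := ProbabilityTheory.strong_law_ae X hX1 hXind hXid
  have hYslln := ProbabilityTheory.strong_law_ae Y hY1 hYind hYid
  have hWslln := ProbabilityTheory.strong_law_ae W hW1 hWind hWid
  set mX : L2unit := ∫ ω, X 0 ω ∂μ
  set mY : L2unit := ∫ ω, Y 0 ω ∂μ
  -- identify the limit
  have hlim : (∫ ω', (inner ℝ (X 0 ω' - mX) (Y 0 ω' - mY) : ℝ) ∂μ)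
      = (∫ ω', W 0 ω' ∂μ) - (inner ℝ mX mY : ℝ) := by
    have hexp : ∀ ω', (inner ℝ (X 0 ω' - mX) (Y 0 ω' - mY) : ℝ)
        = W 0 ω' - (inner ℝ mY (X 0 ω') : ℝ) - (inner ℝ mX (Y 0 ω') : ℝ) + (inner ℝ mX mY : ℝ) := by
      intro ω'
      simp only [inner_sub_left, inner_sub_right, hWdef]
      rw [real_inner_comm (X 0 ω') mY]
      ring
    have hiX : Integrable (fun ω' => (inner ℝ mY (X 0 ω') : ℝ)) μ :=
      (innerSL ℝ mY).integrable_comp hX1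
    have hiY : Integrable (fun ω' => (inner ℝ mX (Y 0 ω') : ℝ)) μ :=
      (innerSL ℝ mX).integrable_comp hY1
    simp only [hexp]
    have h1 : Integrable (fun ω' => W 0 ω' - (inner ℝ mY (X 0 ω') : ℝ)) μ := hW1.sub hiX
    have h2 : Integrable
        (fun ω' => W 0 ω' - (inner ℝ mY (X 0 ω') : ℝ) - (inner ℝ mX (Y 0 ω') : ℝ)) μ := h1.sub hiY
    rw [integral_add h2 (integrable_const _),
      integral_sub h1 hiY, integral_sub hW1 hiX,
      integral_inner hX1 mY, integral_inner hY1 mX, integral_const]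
    simp only [probReal_univ, measure_univ, ENNReal.toReal_one, one_smul]
    rw [real_inner_comm mY mX]
    ring
  rw [hlim]
  filter_upwards [hXslln, hYslln, hWslln] with ω hXω hYω hWω
  -- algebraic identity for each n
  have key : ∀ n : ℕ,
      (n : ℝ)⁻¹ * ∑ i ∈ Finset.range n,
          (inner ℝ (X i ω - (n : ℝ)⁻¹ • ∑ j ∈ Finset.range n, X j ω)
                 (Y i ω - (n : ℝ)⁻¹ • ∑ j ∈ Finset.range n, Y j ω) : ℝ)
      = (n : ℝ)⁻¹ * ∑ i ∈ Finset.range n, W i ω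
        - (inner ℝ ((n : ℝ)⁻¹ • ∑ j ∈ Finset.range n, X j ω)
                 ((n : ℝ)⁻¹ • ∑ j ∈ Finset.range n, Y j ω) : ℝ) := by
    intro n
    rcases Nat.eq_zero_or_pos n with hn | hn
    · simp [hn]
    set c : ℝ := (n : ℝ)⁻¹ with hc
    set s : L2unit := ∑ j ∈ Finset.range n, X j ω with hs
    set t : L2unit := ∑ j ∈ Finset.range n, Y j ω with ht
    have hst : ∀ i ∈ Finset.range n,
        (inner ℝ (X i ω - c • s) (Y i ω - c • t) : ℝ)
        = W i ω - c * (inner ℝ (X i ω) t : ℝ) - c * (inner ℝ s (Y i ω) : ℝ)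
          + c * c * (inner ℝ s t : ℝ) := by
      intro i _
      simp only [inner_sub_left, inner_sub_right, real_inner_smul_left, real_inner_smul_right,
        hWdef]
      ring
    rw [Finset.sum_congr rfl hst]
    simp only [Finset.sum_add_distrib, Finset.sum_sub_distrib, ← Finset.sum_mul,
      ← Finset.mul_sum, Finset.sum_const, Finset.card_range, nsmul_eq_mul]
    rw [← sum_inner, ← inner_sum, ← hs, ← ht, real_inner_smul_left, real_inner_smul_right]
    have hnc : (n : ℝ) * c = 1 := by
      rw [hc, mul_inv_cancel₀ (by exact_mod_cast hn.ne')]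
    have : (n : ℝ) ≠ 0 := by exact_mod_cast hn.ne'
    field_simp [hc]
    linear_combination (c ^ 2 * inner ℝ s t) * hnc
  refine Tendsto.congr (fun n => (key n).symm) ?_
  have hinner_tend :
      Tendsto (fun n : ℕ => (inner ℝ ((n : ℝ)⁻¹ • ∑ j ∈ Finset.range n, X j ω)
        ((n : ℝ)⁻¹ • ∑ j ∈ Finset.range n, Y j ω) : ℝ)) atTop (nhds (inner ℝ mX mY : ℝ)) :=
    hXω.inner hYω
  have hWmul : Tendsto (fun n : ℕ => (n : ℝ)⁻¹ * ∑ i ∈ Finset.range n, W i ω) atTop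
      (nhds (∫ ω', W 0 ω' ∂μ)) := by
    simpa [smul_eq_mul] using hWω
  exact hWmul.sub hinner_tend
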